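/- Under the time-varying stochastic approximation setting described in the context, assume in addition that ‖θ̂_k − θ*_k‖ is square-integrable for every k, that there is ū with u_k ≤ ū < 1 for all k, and that there are constants 0 < x̲ ≤ X < ∞ with x̲ ≤ (M_k√(v_k) + B_k)/(1 − √(u_k)) ≤ X for all k. Then limsup_{k→∞} √(E‖θ̂_k − θ*_k‖²) ≤ limsup_{k→∞} (M_k√(v_k) + B_k)/(1 − √(u_k)). -/

import Mathlib

open MeasureTheory

section Aux

variable {E : Type*} [NormedAddCommGroup E] [InnerProductSpace ℝ E] [CompleteSpace E]

lemma line_deriv (f : E → ℝ) (g : E → E) (hg : ∀ z, HasGradientAt f (g z) z)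
    (x v : E) (t : ℝ) :
    HasDerivAt (fun t : ℝ => f (x + t • v)) (inner ℝ (g (x + t • v)) v : ℝ) t := by
  have hline : HasDerivAt (fun t : ℝ => x + t • v) v t := by
    simpa using ((hasDerivAt_id t).smul_const v).const_add x
  have := (hg (x + t • v)).hasFDerivAt.comp_hasDerivAt t hline
  simpa [InnerProductSpace.toDual_apply_apply, Function.comp_def] using this

lemma grad_lower (f : E → ℝ) (g : E → E) (hg : ∀ z, HasGradientAt f (g z) z)
    (hmono : ∀ z w : E, (0:ℝ) ≤ inner ℝ (z - w) (g z - g w)) (x y : E) :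
    f x + (inner ℝ (g x) (y - x) : ℝ) ≤ f y := by
  set v := y - x with hv
  set ψ : ℝ → ℝ := fun t => f (x + t • v) - t * (inner ℝ (g x) v : ℝ) with hψ
  have hψ' : ∀ t : ℝ, HasDerivAt ψ ((inner ℝ (g (x + t • v)) v : ℝ) - (inner ℝ (g x) v : ℝ)) t :=
    fun t => (line_deriv f g hg x v t).sub (hasDerivAt_mul_const _)
  have hmonoOn : MonotoneOn ψ (Set.Icc (0:ℝ) 1) := by
    apply monotoneOn_of_deriv_nonneg (convex_Icc 0 1)
    · exact fun t _ => ((hψ' t).differentiableAt).continuousAt.continuousWithinAt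
    · exact fun t _ => ((hψ' t).differentiableAt).differentiableWithinAt
    · intro t ht
      rw [interior_Icc] at ht
      rw [(hψ' t).deriv]
      have h := hmono (x + t • v) x
      have h2 : (0:ℝ) ≤ t * (inner ℝ v (g (x + t • v) - g x) : ℝ) := by
        simpa [real_inner_smul_left] using h
      have h3 : (0:ℝ) ≤ (inner ℝ v (g (x + t • v) - g x) : ℝ) :=
        nonneg_of_mul_nonneg_right h2 ht.1
      rw [inner_sub_right] at h3
      have := real_inner_comm v (g (x + t • v))
      have := real_inner_comm v (g x)
      linarith [h3]
  have h01 := hmonoOn (Set.mem_Icc.2 ⟨le_refl 0, zero_le_one⟩) (Set.mem_Icc.2 ⟨zero_le_one, le_refl 1⟩) zero_le_one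
  simp only [hψ, zero_smul, add_zero, one_smul, zero_mul, one_mul, sub_zero] at h01
  have : x + v = y := by simp [hv]
  rw [this] at h01
  linarith

lemma grad_descent (f : E → ℝ) (g : E → E) (hg : ∀ z, HasGradientAt f (g z) z)
    {L : ℝ} (hL : 0 ≤ L)
    (hlip : ∀ z w : E, ‖g z - g w‖ ≤ L * ‖z - w‖) (x y : E) :
    f y ≤ f x + (inner ℝ (g x) (y - x) : ℝ) + L / 2 * ‖y - x‖ ^ 2 := by
  set v := y - x with hv
  set ψ : ℝ → ℝ := fun t => f (x + t • v) - t * (inner ℝ (g x) v : ℝ) - L / 2 * ‖v‖ ^ 2 * t ^ 2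
    with hψ
  have hψ' : ∀ t : ℝ, HasDerivAt ψ
      ((inner ℝ (g (x + t • v)) v : ℝ) - (inner ℝ (g x) v : ℝ) - L / 2 * ‖v‖ ^ 2 * (2 * t)) t := by
    intro t
    have h1 := (line_deriv f g hg x v t).sub (hasDerivAt_mul_const (inner ℝ (g x) v : ℝ))
    have h2 : HasDerivAt (fun t : ℝ => L / 2 * ‖v‖ ^ 2 * t ^ 2) (L / 2 * ‖v‖ ^ 2 * (2 * t)) t := by
      simpa using (hasDerivAt_pow 2 t).const_mul (L / 2 * ‖v‖ ^ 2)
    exact h1.sub h2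
  have hanti : AntitoneOn ψ (Set.Icc (0:ℝ) 1) := by
    apply antitoneOn_of_deriv_nonpos (convex_Icc 0 1)
    · exact fun t _ => ((hψ' t).differentiableAt).continuousAt.continuousWithinAt
    · exact fun t _ => ((hψ' t).differentiableAt).differentiableWithinAt
    · intro t ht
      rw [interior_Icc] at ht
      rw [(hψ' t).deriv]
      have h3 : (inner ℝ (g (x + t • v)) v : ℝ) - (inner ℝ (g x) v : ℝ)
          = (inner ℝ (g (x + t • v) - g x) v : ℝ) := by rw [inner_sub_left]
      have h4 : (inner ℝ (g (x + t • v) - g x) v : ℝ) ≤ ‖g (x + t • v) - g x‖ * ‖v‖ :=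
        real_inner_le_norm _ _
      have h5 : ‖g (x + t • v) - g x‖ ≤ L * (t * ‖v‖) := by
        have := hlip (x + t • v) x
        simpa [norm_smul, abs_of_nonneg ht.1.le] using this
      have h6 : ‖g (x + t • v) - g x‖ * ‖v‖ ≤ L * (t * ‖v‖) * ‖v‖ :=
        mul_le_mul_of_nonneg_right h5 (norm_nonneg v)
      nlinarith [norm_nonneg v, ht.1.le]
  have h01 := hanti (Set.mem_Icc.2 ⟨le_refl 0, zero_le_one⟩) (Set.mem_Icc.2 ⟨zero_le_one, le_refl 1⟩) zero_le_one
  simp only [hψ, zero_smul, add_zero, one_smul, zero_mul, one_mul, sub_zero] at h01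
  have hxy : x + v = y := by simp [hv]
  rw [hxy] at h01
  push_cast at h01
  nlinarith [h01]

lemma cocoercive (f : E → ℝ) (g : E → E) (hg : ∀ z, HasGradientAt f (g z) z)
    {L : ℝ} (hL : 0 < L)
    (hmono : ∀ z w : E, (0:ℝ) ≤ inner ℝ (z - w) (g z - g w))
    (hlip : ∀ z w : E, ‖g z - g w‖ ≤ L * ‖z - w‖) (x y : E) :
    ‖g x - g y‖ ^ 2 ≤ L * (inner ℝ (x - y) (g x - g y) : ℝ) := by
  have key : ∀ x y : E, f x + (inner ℝ (g x) (y - x) : ℝ) + 1 / (2 * L) * ‖g y - g x‖ ^ 2 ≤ f y := by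
    intro x y
    set w := g y - g x with hw
    set z := y - (1 / L) • w with hz
    have h1 := grad_lower f g hg hmono x z
    have h2 := grad_descent f g hg hL.le hlip y z
    have e1 : (inner ℝ (g x) (z - x) : ℝ)
        = (inner ℝ (g x) (y - x) : ℝ) - (1 / L) * (inner ℝ (g x) w : ℝ) := by
      rw [hz]
      rw [show y - (1 / L) • w - x = (y - x) - (1/L) • w by abel]
      rw [inner_sub_right, real_inner_smul_right]
    have e2 : (inner ℝ (g y) (z - y) : ℝ) = -((1 / L) * (inner ℝ (g y) w : ℝ)) := by
      rw [hz]
      rw [show y - (1 / L) • w - y = -((1/L) • w) by abel]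
      rw [inner_neg_right, real_inner_smul_right]
    have e3 : ‖z - y‖ ^ 2 = (1 / L) ^ 2 * ‖w‖ ^ 2 := by
      rw [hz, show y - (1 / L) • w - y = -((1/L) • w) by abel]
      rw [norm_neg, norm_smul]
      rw [Real.norm_eq_abs, abs_of_nonneg (by positivity : (0:ℝ) ≤ 1/L)]
      ring
    have e4 : (inner ℝ (g y) w : ℝ) - (inner ℝ (g x) w : ℝ) = ‖w‖ ^ 2 := by
      rw [← inner_sub_left, ← hw, real_inner_self_eq_norm_sq]
    rw [e1] at h1
    rw [e2, e3] at h2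
    have h2' : L / 2 * ((1 / L) ^ 2 * ‖w‖ ^ 2) = 1 / (2 * L) * ‖w‖ ^ 2 := by
      field_simp
    rw [h2'] at h2
    have e4' : (1 / L) * (inner ℝ (g y) w : ℝ) - (1 / L) * (inner ℝ (g x) w : ℝ)
        = (1 / L) * ‖w‖ ^ 2 := by rw [← mul_sub, e4]
    have hhalf : (1 / L) * ‖w‖ ^ 2 - 1 / (2 * L) * ‖w‖ ^ 2 = 1 / (2 * L) * ‖w‖ ^ 2 := by
      field_simp
      ring
    linarith [h1, h2, e4', hhalf]
  have k1 := key x y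
  have k2 := key y x
  have e5 : (inner ℝ (g x) (y - x) : ℝ) + (inner ℝ (g y) (x - y) : ℝ)
      = -(inner ℝ (x - y) (g x - g y) : ℝ) := by
    have a1 : (inner ℝ (x - y) (g x - g y) : ℝ)
        = inner ℝ x (g x) - inner ℝ x (g y) - (inner ℝ y (g x) - inner ℝ y (g y)) := by
      rw [inner_sub_left, inner_sub_right, inner_sub_right]
    have a2 : (inner ℝ (g x) (y - x) : ℝ) = inner ℝ y (g x) - inner ℝ x (g x) := by
      rw [inner_sub_right, real_inner_comm (g x) y, real_inner_comm (g x) x]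
    have a3 : (inner ℝ (g y) (x - y) : ℝ) = inner ℝ x (g y) - inner ℝ y (g y) := by
      rw [inner_sub_right, real_inner_comm (g y) x, real_inner_comm (g y) y]
    rw [a1, a2, a3]
    ring
  have e6 : ‖g y - g x‖ = ‖g x - g y‖ := norm_sub_rev _ _
  rw [e6] at k1
  have e7 : ‖g x - g y‖ = ‖g y - g x‖ := norm_sub_rev _ _
  rw [← e6] at k2
  rw [e6] at k2
  have h := add_le_add k1 k2
  have hfrac : 1 / (2 * L) * ‖g x - g y‖ ^ 2 + 1 / (2 * L) * ‖g x - g y‖ ^ 2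
      = (1 / L) * ‖g x - g y‖ ^ 2 := by
    field_simp
    ring
  have hWS : (1 / L) * ‖g x - g y‖ ^ 2 ≤ (inner ℝ (x - y) (g x - g y) : ℝ) := by
    linarith
  have hmul := mul_le_mul_of_nonneg_left hWS hL.le
  have hid : L * ((1 / L) * ‖g x - g y‖ ^ 2) = ‖g x - g y‖ ^ 2 := by
    field_simp
  linarith [hmul, hid.symm.le, hid.le]

lemma stepA {a q C L u v : ℝ} (x G e : E)
    (ha : 0 < a) (hq : 0 < q) (hC : 0 < C) (hCL : C ≤ L)
    (haL : 1 ≤ a * L) (haLq : (q + 1) * (a * L - 1) ≤ 1)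
    (hu : u = L / C + a * C * ((q + 1) * (a * L - 1) - 1))
    (hv : v = a * (a * L * (q + 1) - 1) / (q * C))
    (hS : C * ‖x‖ ^ 2 ≤ (inner ℝ x G : ℝ))
    (hco : ‖G‖ ^ 2 ≤ L * (inner ℝ x G : ℝ)) :
    ‖x - a • (G + e)‖ ≤ Real.sqrt u * ‖x‖ + Real.sqrt v * ‖e‖ := by
  have hL : 0 < L := lt_of_lt_of_le hC hCL
  have haL2 : a * L ≤ 2 := by nlinarith [hq, haLq, haL]
  -- 0 ≤ u
  have hu0 : 0 ≤ u := by
    rw [hu]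
    rw [div_add' _ _ _ hC.ne']
    apply div_nonneg _ hC.le
    nlinarith [mul_nonneg (mul_nonneg ha.le (sub_nonneg.2 hCL)) (sub_nonneg.2 haL2),
      mul_nonneg (mul_nonneg (mul_nonneg ha.le (mul_pos hC hC).le) hq.le) (sub_nonneg.2 haL),
      sq_nonneg (a * L - 1), mul_pos hC hC]
  -- ‖x - a • G‖ ^ 2 ≤ u * ‖x‖ ^ 2
  have hkey : ‖x - a • G‖ ^ 2 ≤ u * ‖x‖ ^ 2 := by
    have hexp : ‖x - a • G‖ ^ 2 = ‖x‖ ^ 2 - 2 * (a * (inner ℝ x G : ℝ)) + a ^ 2 * ‖G‖ ^ 2 := by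
      rw [norm_sub_sq_real, real_inner_smul_right, norm_smul, Real.norm_eq_abs,
        abs_of_nonneg ha.le, mul_pow]
    rw [hexp]
    have h1 : a ^ 2 * ‖G‖ ^ 2 ≤ a ^ 2 * (L * (inner ℝ x G : ℝ)) :=
      mul_le_mul_of_nonneg_left hco (sq_nonneg a)
    have h2 : a * (a * L - 2) * (inner ℝ x G : ℝ) ≤ a * (a * L - 2) * (C * ‖x‖ ^ 2) := by
      apply mul_le_mul_of_nonpos_left hS
      apply mul_nonpos_of_nonneg_of_nonpos ha.le
      linarith
    have h3 : (1 + a * C * (a * L - 2)) * ‖x‖ ^ 2 ≤ u * ‖x‖ ^ 2 := by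
      apply mul_le_mul_of_nonneg_right _ (sq_nonneg _)
      rw [hu, ← sub_nonneg]
      have key : L / C + a * C * ((q + 1) * (a * L - 1) - 1) - (1 + a * C * (a * L - 2))
          = (L - C) / C + a * C * q * (a * L - 1) := by
        field_simp
        ring
      rw [key]
      have : 0 ≤ (L - C) / C := div_nonneg (by linarith) hC.le
      nlinarith [mul_nonneg (mul_nonneg (mul_nonneg ha.le hC.le) hq.le) (sub_nonneg.2 haL)]
    nlinarith [h1, h2, h3]
  -- then ‖x - a•G‖ ≤ √u ‖x‖
  have hnorm : ‖x - a • G‖ ≤ Real.sqrt u * ‖x‖ := by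
    have := Real.sqrt_le_sqrt hkey
    rwa [Real.sqrt_sq (norm_nonneg _), Real.sqrt_mul hu0, Real.sqrt_sq (norm_nonneg _)] at this
  -- a ≤ √v
  have hav : a ≤ Real.sqrt v := by
    rw [show a = Real.sqrt (a ^ 2) from (Real.sqrt_sq ha.le).symm]
    apply Real.sqrt_le_sqrt
    rw [hv, le_div_iff₀ (by positivity)]
    nlinarith [mul_nonneg (mul_nonneg (mul_nonneg ha.le ha.le) hq.le) (sub_nonneg.2 hCL),
      mul_nonneg ha.le (sub_nonneg.2 haL)]
  calc ‖x - a • (G + e)‖ = ‖(x - a • G) - a • e‖ := by rw [smul_add]; abel_nf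
    _ ≤ ‖x - a • G‖ + ‖a • e‖ := norm_sub_le _ _
    _ ≤ Real.sqrt u * ‖x‖ + a * ‖e‖ := by
        rw [norm_smul, Real.norm_eq_abs, abs_of_nonneg ha.le]
        exact add_le_add hnorm le_rfl
    _ ≤ Real.sqrt u * ‖x‖ + Real.sqrt v * ‖e‖ := by
        exact add_le_add le_rfl (mul_le_mul_of_nonneg_right hav (norm_nonneg _))

lemma eLp_eq_sqrt {Ω : Type*} [MeasurableSpace Ω] {P : Measure Ω} (h : Ω → E)
    (hf : MemLp h 2 P) :
    eLpNorm h 2 P = ENNReal.ofReal (Real.sqrt (∫ ω, ‖h ω‖ ^ 2 ∂P)) := by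
  rw [hf.eLpNorm_eq_integral_rpow_norm two_ne_zero ENNReal.ofNat_ne_top]
  congr 1
  rw [Real.sqrt_eq_rpow]
  norm_num

lemma L2step {Ω : Type*} [MeasurableSpace Ω] {P : Measure Ω}
    (W X Y Z : Ω → E) (c1 c2 : ℝ) (hc1 : 0 ≤ c1) (hc2 : 0 ≤ c2)
    (hWm : AEStronglyMeasurable W P) (hWint : Integrable (fun ω => ‖W ω‖ ^ 2) P)
    (hX : MemLp X 2 P) (hY : MemLp Y 2 P) (hZ : MemLp Z 2 P)
    (hae : ∀ᵐ ω ∂P, ‖W ω‖ ≤ c1 * ‖X ω‖ + c2 * ‖Y ω‖ + ‖Z ω‖) :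
    Real.sqrt (∫ ω, ‖W ω‖ ^ 2 ∂P) ≤
      c1 * Real.sqrt (∫ ω, ‖X ω‖ ^ 2 ∂P) + c2 * Real.sqrt (∫ ω, ‖Y ω‖ ^ 2 ∂P)
        + Real.sqrt (∫ ω, ‖Z ω‖ ^ 2 ∂P) := by
  have mW : MemLp W 2 P := (memLp_two_iff_integrable_sq_norm hWm).2 hWint
  set F1 : Ω → ℝ := fun ω => c1 * ‖X ω‖ with hF1
  set F2 : Ω → ℝ := fun ω => c2 * ‖Y ω‖ with hF2
  set F3 : Ω → ℝ := fun ω => ‖Z ω‖ with hF3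
  have m1 : AEStronglyMeasurable F1 P := (hX.aestronglyMeasurable.norm.const_smul c1 : )
  have m2 : AEStronglyMeasurable F2 P := (hY.aestronglyMeasurable.norm.const_smul c2 : )
  have m3 : AEStronglyMeasurable F3 P := hZ.aestronglyMeasurable.norm
  have step1 : eLpNorm W 2 P ≤ eLpNorm (fun ω => F1 ω + F2 ω + F3 ω) 2 P :=
    eLpNorm_mono_ae_real hae
  have step2 : eLpNorm (fun ω => F1 ω + F2 ω + F3 ω) 2 P ≤
      eLpNorm F1 2 P + eLpNorm F2 2 P + eLpNorm F3 2 P :=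
    le_trans (eLpNorm_add_le (m1.add m2) m3 one_le_two)
      (add_le_add_left (eLpNorm_add_le m1 m2 one_le_two) _)
  have e1 : eLpNorm F1 2 P = ENNReal.ofReal c1 * eLpNorm X 2 P := by
    have : F1 = c1 • (fun ω => ‖X ω‖) := rfl
    rw [this, eLpNorm_const_smul, eLpNorm_norm]
    congr 1
    simp [Real.enorm_eq_ofReal hc1]
  have e2 : eLpNorm F2 2 P = ENNReal.ofReal c2 * eLpNorm Y 2 P := by
    have : F2 = c2 • (fun ω => ‖Y ω‖) := rfl
    rw [this, eLpNorm_const_smul, eLpNorm_norm]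
    congr 1
    simp [Real.enorm_eq_ofReal hc2]
  have e3 : eLpNorm F3 2 P = eLpNorm Z 2 P := eLpNorm_norm Z
  have final : ENNReal.ofReal (Real.sqrt (∫ ω, ‖W ω‖ ^ 2 ∂P)) ≤
      ENNReal.ofReal (c1 * Real.sqrt (∫ ω, ‖X ω‖ ^ 2 ∂P)
        + c2 * Real.sqrt (∫ ω, ‖Y ω‖ ^ 2 ∂P) + Real.sqrt (∫ ω, ‖Z ω‖ ^ 2 ∂P)) := by
    rw [← eLp_eq_sqrt W mW]
    refine le_trans step1 (le_trans step2 ?_)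
    rw [e1, e2, e3, eLp_eq_sqrt X hX, eLp_eq_sqrt Y hY, eLp_eq_sqrt Z hZ]
    rw [← ENNReal.ofReal_mul hc1, ← ENNReal.ofReal_mul hc2]
    rw [← ENNReal.ofReal_add (by positivity) (by positivity),
      ← ENNReal.ofReal_add (by positivity) (Real.sqrt_nonneg _)]
  rw [ENNReal.ofReal_le_ofReal_iff (by positivity)] at final
  exact le_trans (le_of_eq rfl) final

lemma limsup_rec (D r su : ℕ → ℝ) (s Xb : ℝ) (hs0 : 0 ≤ s) (hs1 : s < 1)
    (hsu0 : ∀ k, 0 ≤ su k) (hsus : ∀ k, su k ≤ s)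
    (hD0 : ∀ k, 0 ≤ D k)
    (hrX : ∀ k, r k ≤ Xb)
    (hrec : ∀ k, D (k + 1) ≤ su k * D k + (1 - su k) * r k) :
    Filter.limsup D Filter.atTop ≤ Filter.limsup r Filter.atTop := by
  set R := Filter.limsup r Filter.atTop with hR
  have hrbdd : Filter.IsBoundedUnder (· ≤ ·) Filter.atTop r :=
    ⟨Xb, Filter.eventually_map.2 (Filter.Eventually.of_forall hrX)⟩
  have hcobdd : Filter.IsCoboundedUnder (· ≤ ·) Filter.atTop D :=
    Filter.IsBoundedUnder.isCoboundedUnder_le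
      ⟨0, Filter.eventually_map.2 (Filter.Eventually.of_forall hD0)⟩
  apply le_of_forall_pos_le_add
  intro ε hε
  have hhalf : 0 < ε / 2 := by linarith
  have hev : ∀ᶠ k in Filter.atTop, r k < R + ε / 2 :=
    Filter.eventually_lt_of_limsup_lt (by linarith) hrbdd
  obtain ⟨N, hN⟩ := Filter.eventually_atTop.1 hev
  set m := R + ε / 2 with hm
  set K := max (D N - m) 0 with hK
  have hK0 : 0 ≤ K := le_max_right _ _
  have claim : ∀ j, D (N + j) ≤ m + s ^ j * K := by
    intro j
    induction j with
    | zero => simpa using le_trans (by linarith [le_max_left (D N - m) (0:ℝ)]) le_rfl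
    | succ j ih =>
      have h1 := hrec (N + j)
      have h2 : su (N + j) * D (N + j) ≤ su (N + j) * (m + s ^ j * K) :=
        mul_le_mul_of_nonneg_left ih (hsu0 _)
      have h3 : (1 - su (N + j)) * r (N + j) ≤ (1 - su (N + j)) * m := by
        apply mul_le_mul_of_nonneg_left (le_of_lt (hN (N + j) (by omega))) _
        have := hsus (N + j); linarith
      have h4 : su (N + j) * (s ^ j * K) ≤ s * (s ^ j * K) :=
        mul_le_mul_of_nonneg_right (hsus _) (by positivity)
      have : D (N + j + 1) ≤ m + s * (s ^ j * K) := by nlinarith [h1, h2, h3, h4]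
      calc D (N + (j + 1)) = D (N + j + 1) := by ring_nf
        _ ≤ m + s * (s ^ j * K) := this
        _ = m + s ^ (j + 1) * K := by ring
  obtain ⟨J, hJ⟩ : ∃ J, s ^ J * K ≤ ε / 2 := by
    rcases eq_or_lt_of_le hK0 with h | h
    · exact ⟨0, by rw [← h]; simpa using hhalf.le⟩
    · have := (tendsto_pow_atTop_nhds_zero_of_lt_one hs0 hs1).mul_const K
      rw [zero_mul] at this
      have := this.eventually_le_const hhalf
      obtain ⟨J, hJ⟩ := Filter.eventually_atTop.1 this
      exact ⟨J, hJ J le_rfl⟩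
  have hfin : ∀ᶠ k in Filter.atTop, D k ≤ R + ε := by
    rw [Filter.eventually_atTop]
    refine ⟨N + J, fun k hk => ?_⟩
    obtain ⟨j, rfl⟩ : ∃ j, k = N + j := ⟨k - N, by omega⟩
    have hjJ : J ≤ j := by omega
    have hpow : s ^ j ≤ s ^ J := pow_le_pow_of_le_one hs0 hs1.le hjJ
    have : s ^ j * K ≤ s ^ J * K := mul_le_mul_of_nonneg_right hpow hK0
    have := claim j
    have : D (N + j) ≤ m + s ^ J * K := by linarith
    rw [hm] at this
    linarith
  exact Filter.limsup_le_of_le hcobdd hfin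

end Aux

/-- Asymptotic RMS bound: under the bounded-drift time-varying stochastic
approximation setting, if additionally `u_k ≤ ū < 1` for all `k` and
`0 < x̲ ≤ (M_k√(v_k)+B_k)/(1−√(u_k)) ≤ X < ∞` for all `k`, then
`limsup_k √(E‖θ̂_k − θ*_k‖²) ≤ limsup_k (M_k√(v_k)+B_k)/(1−√(u_k))`. -/
theorem stmt_3 {p : ℕ} (hp : 1 ≤ p)
    {Ω : Type} [MeasurableSpace Ω] (P : Measure Ω) [IsProbabilityMeasure P]
    (θhat θstar e : ℕ → Ω → EuclideanSpace ℝ (Fin p))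
    (f : ℕ → Ω → EuclideanSpace ℝ (Fin p) → ℝ)
    (g : ℕ → Ω → EuclideanSpace ℝ (Fin p) → EuclideanSpace ℝ (Fin p))
    (a q C L M B u v : ℕ → ℝ)
    (hmeas1 : ∀ k, Measurable (θhat k))
    (hmeas2 : ∀ k, Measurable (θstar k))
    (hmeas3 : ∀ k, Measurable (e k))
    (hCpos : ∀ k, 0 < C k) (hM : ∀ k, 0 ≤ M k) (hB : ∀ k, 0 ≤ B k)
    (hreg : ∀ k, ∀ᵐ ω ∂P,
      ContDiff ℝ 1 (f k ω) ∧
      (∀ x, HasGradientAt (f k ω) (g k ω x) x) ∧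
      (∀ x y : EuclideanSpace ℝ (Fin p),
        C k * ‖x - y‖ ^ 2 ≤ (inner ℝ (x - y) (g k ω x - g k ω y) : ℝ)) ∧
      (∀ x y : EuclideanSpace ℝ (Fin p), ‖g k ω x - g k ω y‖ ≤ L k * ‖x - y‖) ∧
      g k ω (θstar k ω) = 0)
    (hrec : ∀ k, ∀ᵐ ω ∂P,
      θhat (k + 1) ω = θhat k ω - a k • (g k ω (θhat k ω) + e k ω))
    (heL2 : ∀ k, MemLp (e k) 2 P)
    (heM : ∀ k, (∫ ω, ‖e k ω‖ ^ 2 ∂P) ≤ M k ^ 2)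
    (hdL2 : ∀ k, MemLp (fun ω => θstar (k + 1) ω - θstar k ω) 2 P)
    (hdB : ∀ k, (∫ ω, ‖θstar (k + 1) ω - θstar k ω‖ ^ 2 ∂P) ≤ B k ^ 2)
    (ha : ∀ k, 0 < a k) (hq : ∀ k, 0 < q k)
    (haL : ∀ k, 1 ≤ a k * L k)
    (haLq : ∀ k, (q k + 1) * (a k * L k - 1) ≤ 1)
    (hu : ∀ k, u k = L k / C k + a k * C k * ((q k + 1) * (a k * L k - 1) - 1))
    (hv : ∀ k, v k = a k * (a k * L k * (q k + 1) - 1) / (q k * C k))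
    (hint : ∀ k, Integrable (fun ω => ‖θhat k ω - θstar k ω‖ ^ 2) P)
    (ubar : ℝ) (hubar1 : ubar < 1) (hubar : ∀ k, u k ≤ ubar)
    (xlo X : ℝ) (hxlo : 0 < xlo) (hxloX : xlo ≤ X)
    (hratio : ∀ k,
      xlo ≤ (M k * Real.sqrt (v k) + B k) / (1 - Real.sqrt (u k)) ∧
        (M k * Real.sqrt (v k) + B k) / (1 - Real.sqrt (u k)) ≤ X) :
    Filter.limsup (fun k => Real.sqrt (∫ ω, ‖θhat k ω - θstar k ω‖ ^ 2 ∂P))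
        Filter.atTop ≤
      Filter.limsup
        (fun k => (M k * Real.sqrt (v k) + B k) / (1 - Real.sqrt (u k)))
        Filter.atTop := by
  have hae : (MeasureTheory.ae P).NeBot := ae_neBot.2 (IsProbabilityMeasure.ne_zero P)
  -- C k ≤ L k
  have hCL : ∀ k, C k ≤ L k := by
    intro k
    obtain ⟨ω, _, _, hmono, hlip, _⟩ := (hreg k).exists
    set x0 : EuclideanSpace ℝ (Fin p) := EuclideanSpace.single ⟨0, hp⟩ (1:ℝ) with hx0
    have hnx0 : ‖x0 - 0‖ = 1 := by
      rw [sub_zero, hx0, EuclideanSpace.norm_single, norm_one]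
    have h1 := hmono x0 0
    have h2 := real_inner_le_norm (x0 - 0) (g k ω x0 - g k ω 0)
    have h3 := hlip x0 0
    rw [hnx0] at h1 h2 h3
    nlinarith [h1, h2, h3]
  -- abbreviations
  set D : ℕ → ℝ := fun k => Real.sqrt (∫ ω, ‖θhat k ω - θstar k ω‖ ^ 2 ∂P) with hD
  set r : ℕ → ℝ := fun k => (M k * Real.sqrt (v k) + B k) / (1 - Real.sqrt (u k)) with hr
  set s : ℝ := Real.sqrt (max ubar 0) with hsdef
  have hs0 : 0 ≤ s := Real.sqrt_nonneg _
  have hs1 : s < 1 := by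
    rw [hsdef, show (1:ℝ) = Real.sqrt 1 from Real.sqrt_one.symm]
    exact Real.sqrt_lt_sqrt (le_max_right _ _) (by simp [hubar1])
  have hsu : ∀ k, Real.sqrt (u k) ≤ s :=
    fun k => Real.sqrt_le_sqrt (le_trans (hubar k) (le_max_left _ _))
  have h1mu : ∀ k, 0 < 1 - Real.sqrt (u k) := fun k => by linarith [hsu k, hs1]
  -- one-step bound
  have hstep : ∀ k, D (k + 1) ≤ Real.sqrt (u k) * D k
      + (1 - Real.sqrt (u k)) * r k := by
    intro k
    have hLpos : 0 < L k := lt_of_lt_of_le (hCpos k) (hCL k)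
    have hXm : MemLp (fun ω => θhat k ω - θstar k ω) 2 P :=
      (memLp_two_iff_integrable_sq_norm
        ((hmeas1 k).sub (hmeas2 k)).aestronglyMeasurable).2 (hint k)
    have haeb : ∀ᵐ ω ∂P, ‖θhat (k+1) ω - θstar (k+1) ω‖ ≤
        Real.sqrt (u k) * ‖θhat k ω - θstar k ω‖ + Real.sqrt (v k) * ‖e k ω‖
          + ‖θstar (k+1) ω - θstar k ω‖ := by
      filter_upwards [hreg k, hrec k] with ω hregω hrecω
      obtain ⟨_, hgrad, hmono, hlip, hzero⟩ := hregω
      have hmono0 : ∀ z w : EuclideanSpace ℝ (Fin p),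
          (0:ℝ) ≤ inner ℝ (z - w) (g k ω z - g k ω w) := fun z w =>
        le_trans (mul_nonneg (hCpos k).le (by positivity)) (hmono z w)
      have hco := cocoercive (f k ω) (g k ω) hgrad hLpos hmono0 hlip
        (θhat k ω) (θstar k ω)
      have hS := hmono (θhat k ω) (θstar k ω)
      rw [hzero, sub_zero] at hco hS
      have hkey := stepA (θhat k ω - θstar k ω) (g k ω (θhat k ω)) (e k ω)
        (ha k) (hq k) (hCpos k) (hCL k) (haL k) (haLq k) (hu k) (hv k) hS hco
      have hWeq : θhat (k+1) ω - θstar (k+1) ω =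
          ((θhat k ω - θstar k ω) - a k • (g k ω (θhat k ω) + e k ω))
            - (θstar (k+1) ω - θstar k ω) := by
        rw [hrecω]; abel
      rw [hWeq]
      refine le_trans (norm_sub_le _ _) ?_
      exact add_le_add_left hkey _
    have hL2 := L2step (fun ω => θhat (k+1) ω - θstar (k+1) ω)
      (fun ω => θhat k ω - θstar k ω) (e k)
      (fun ω => θstar (k+1) ω - θstar k ω)
      (Real.sqrt (u k)) (Real.sqrt (v k)) (Real.sqrt_nonneg _) (Real.sqrt_nonneg _)
      ((hmeas1 (k+1)).sub (hmeas2 (k+1))).aestronglyMeasurable (hint (k+1))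
      hXm (heL2 k) (hdL2 k) haeb
    have hMe : Real.sqrt (∫ ω, ‖e k ω‖ ^ 2 ∂P) ≤ M k := by
      refine le_trans (Real.sqrt_le_sqrt (heM k)) ?_
      rw [Real.sqrt_sq (hM k)]
    have hBd : Real.sqrt (∫ ω, ‖θstar (k+1) ω - θstar k ω‖ ^ 2 ∂P) ≤ B k := by
      refine le_trans (Real.sqrt_le_sqrt (hdB k)) ?_
      rw [Real.sqrt_sq (hB k)]
    have hc : (1 - Real.sqrt (u k)) * r k = M k * Real.sqrt (v k) + B k := by
      rw [hr, mul_div_cancel₀ _ (h1mu k).ne']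
    have : D (k + 1) ≤ Real.sqrt (u k) * D k + Real.sqrt (v k) * M k + B k := by
      refine le_trans hL2 ?_
      have := mul_le_mul_of_nonneg_left hMe (Real.sqrt_nonneg (v k))
      rw [hD]
      push_cast
      linarith [this, hBd]
    rw [hc]
    linarith [this]
  exact limsup_rec D r (fun k => Real.sqrt (u k)) s X hs0 hs1
    (fun k => Real.sqrt_nonneg _) hsu (fun k => Real.sqrt_nonneg _)
    (fun k => (hratio k).2) hstep
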